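/- Extend the passthrough clause of the C_i ordinal notation system as follows: in testing standardness of C_i(a,b), also allow passthrough through occurrences of C_j(e,f) with j = i and e < a (i.e., allow clause (ii) whenever (j,e) < (i,a) lexicographically, rather than only when j < i). Then a term is standard under the extended definition if and only if it is standard under the original definition; consequently, under the identification of C_i(a,b) with C(Ω·i + a, b), the C_i system permits exactly the same terms below Ω, with the same comparison, as the Degrees of Reflection with Passthrough system using pairing for the notation O above Ω. -/
import Mathlib


/-- Terms of the `C_i` ordinal notation system: the constant `0` and, for each natural
number `i`, a binary function symbol `C_i`.  Under the identification of `C_i(a,b)` with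
`C(Ω·i + a, b)`, these are also the terms below `Ω` of the Degrees of Reflection with
Passthrough system using pairing for the notation `O` above `Ω`. -/
inductive CT where
  | zero : CT
  | C (i : ℕ) (a b : CT) : CT

/-- The comparison relation: `0 < C_i(a,b)`, and `C_i(a,b) < C_j(c,d)` iff
`C_i(a,b) ≤ d`, or (`b < C_j(c,d)` and `(i,a) < (j,c)` lexicographically).  This is
also the comparison of the corresponding Degrees of Reflection with Passthrough
terms below `Ω`. -/
def clt : CT → CT → Prop
  | _, .zero => False
  | .zero, .C _ _ _ => True
  | .C i a b, .C j c d =>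
      (clt (CT.C i a b) d ∨ CT.C i a b = d) ∨
      (clt b (CT.C j c d) ∧ (i < j ∨ (i = j ∧ clt a c)))
termination_by t u => sizeOf t + sizeOf u
decreasing_by all_goals (simp only [CT.C.sizeOf_spec]; omega)

/-- `t ≤ u` for terms. -/
def cle (t u : CT) : Prop := clt t u ∨ t = u

/-- Directions into the two arguments of `C_i`. -/
inductive Dir where
  | l : Dir
  | r : Dir

/-- The subterm occurrence of a term at a position (a path of directions), if any. -/
def occAt : CT → List Dir → Option CT
  | t, [] => some t
  | .zero, _ :: _ => none
  | .C _ a _, Dir.l :: p => occAt a p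
  | .C _ _ b, Dir.r :: p => occAt b p

/-- `a` is built from below from `< C_i(a,b)` with passthrough: every occurrence
(position `p`) in `a` of a subterm `x` with `x > a` either
(i) lies inside an occurrence of a subterm `z` of `a` with `z < C_i(a,b)`, or
(ii) is a proper subterm of an occurrence of a term `C_j(e,f)` with `j < i` (or, in the
    extended version `ext = true`, with `j < i`, or `j = i` and `e < a`, i.e.
    `(j,e) < (i,a)` lexicographically) which does not lie inside a subterm of that
    occurrence of `C_j(e,f)` that is `< C_j(e,f)`. -/
def BFB (ext : Bool) (i : ℕ) (a b : CT) : Prop :=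
  ∀ (p : List Dir) (x : CT), occAt a p = some x → clt a x →
    (∃ (q : List Dir) (z : CT), q <+: p ∧ occAt a q = some z ∧ clt z (CT.C i a b)) ∨
    (∃ (q : List Dir) (j : ℕ) (e f : CT), q <+: p ∧ q ≠ p ∧
        occAt a q = some (CT.C j e f) ∧
        (j < i ∨ (ext = true ∧ j = i ∧ clt e a)) ∧
        ∀ (r : List Dir) (z : CT), q <+: r → r <+: p → occAt a r = some z →
          ¬ clt z (CT.C j e f))

/-- Standardness of terms of the `C_i` system (original version for `ext = false`,
extended-passthrough version for `ext = true`). -/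
def Std (ext : Bool) : CT → Prop
  | .zero => True
  | .C i a b => Std ext a ∧ Std ext b ∧
      (b = CT.zero ∨ ∃ (j : ℕ) (c d : CT), b = CT.C j c d ∧
        (i < j ∨ (i = j ∧ cle a c))) ∧
      BFB ext i a b

/- ---- helper lemmas ---- -/

theorem clt_trans : ∀ (a b c : CT), clt a b → clt b c → clt a c
  | _, _, CT.zero, _, h2 => absurd h2 (by simp [clt])
  | CT.zero, _, CT.C _ _ _, _, _ => by simp [clt]
  | CT.C α a1 a2, b, CT.C γ c1 c2, h1, h2 => by
    match b, h1, h2 with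
    | CT.zero, h1, _ => exact absurd h1 (by simp [clt])
    | CT.C β b1 b2, h1, h2 =>
      rw [clt] at h2
      rcases h2 with (hbc2 | hbeq) | ⟨hb2c, hlex2⟩
      · rw [clt]
        exact Or.inl (Or.inl (clt_trans _ _ _ h1 hbc2))
      · rw [clt]; exact Or.inl (Or.inl (hbeq ▸ h1))
      · rw [clt] at h1
        rcases h1 with (hab2 | haeq) | ⟨ha2b, hlex1⟩
        · exact clt_trans _ _ _ hab2 hb2c
        · exact haeq ▸ hb2c
        · rw [clt]
          refine Or.inr ⟨clt_trans _ _ _ ha2b (by rw [clt]; exact Or.inr ⟨hb2c, hlex2⟩), ?_⟩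
          rcases hlex1 with h | ⟨he1, h1'⟩
          · rcases hlex2 with h' | ⟨he2, _⟩
            · exact Or.inl (h.trans h')
            · exact Or.inl (he2 ▸ h)
          · rcases hlex2 with h' | ⟨he2, h2'⟩
            · exact Or.inl (he1 ▸ h')
            · exact Or.inr ⟨he1.trans he2, clt_trans _ _ _ h1' h2'⟩
termination_by a b c => sizeOf a + sizeOf b + sizeOf c
decreasing_by all_goals (simp only [CT.C.sizeOf_spec]; omega)

theorem clt_b_self (b : CT) (i : ℕ) (a : CT) : clt b (CT.C i a b) := by
  cases b with
  | zero => simp [clt]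
  | C j c d => rw [clt]; exact Or.inl (Or.inr rfl)

theorem occAt_append_some {t y : CT} {p : List Dir} (h : occAt t p = some y)
    (r : List Dir) : occAt t (p ++ r) = occAt y r := by
  induction p generalizing t with
  | nil => simp [occAt] at h; subst h; rfl
  | cons d p ih =>
    cases t with
    | zero => simp [occAt] at h
    | C i a b =>
      cases d with
      | l => simp only [List.cons_append, occAt] at h ⊢; exact ih h
      | r => simp only [List.cons_append, occAt] at h ⊢; exact ih h

theorem Std_occAt {ext : Bool} : ∀ {p : List Dir} {t z : CT},
    Std ext t → occAt t p = some z → Std ext z := by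
  intro p
  induction p with
  | nil => intro t z hs h; simp [occAt] at h; exact h ▸ hs
  | cons d p ih =>
    intro t z hs h
    cases t with
    | zero => simp [occAt] at h
    | C i a b =>
      rw [Std] at hs
      cases d with
      | l => exact ih hs.1 h
      | r => exact ih hs.2.1 h

theorem prefix_cancel {q r₁ p₁ : List Dir} {d : Dir}
    (h : (q ++ d :: r₁) <+: (q ++ d :: p₁)) : r₁ <+: p₁ := by
  obtain ⟨s, hs⟩ := h
  refine ⟨s, ?_⟩
  rw [List.append_assoc] at hs
  have := List.append_cancel_left hs
  simpa using this

theorem prefix_ext {q r₁ p₁ : List Dir} (d : Dir) (h : r₁ <+: p₁) :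
    (q ++ d :: r₁) <+: (q ++ d :: p₁) := by
  obtain ⟨s, hs⟩ := h
  exact ⟨s, by rw [List.append_assoc]; simp [hs]⟩

/- ---- main conversion lemma ---- -/

theorem convertW (a x : CT) (i : ℕ) (p : List Dir)
    (hax : clt a x) (hpx : occAt a p = some x)
    (q : List Dir) (e f : CT)
    (hq : occAt a q = some (CT.C i e f)) (hea : clt e a) (hqp : q <+: p) (hqnep : q ≠ p)
    (hB : ∀ r z, q <+: r → r <+: p → occAt a r = some z → ¬ clt z (CT.C i e f))
    (hstd : Std true (CT.C i e f)) :
    ∃ (q' : List Dir) (j' : ℕ) (e' f' : CT), q' <+: p ∧ q' ≠ p ∧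
      occAt a q' = some (CT.C j' e' f') ∧ j' < i ∧
      ∀ r z, q' <+: r → r <+: p → occAt a r = some z → ¬ clt z (CT.C j' e' f') := by
  obtain ⟨s, hs⟩ := hqp
  match s, hs with
  | [], hs => exact absurd (by simpa using hs.symm) (Ne.symm hqnep)
  | Dir.r :: p₁, hs =>
    exfalso
    refine hB (q ++ [Dir.r]) f ⟨[Dir.r], rfl⟩ ⟨p₁, by rw [← hs]; simp⟩ ?_ (clt_b_self f i e)
    rw [occAt_append_some hq [Dir.r]]; simp [occAt]
  | Dir.l :: p₁, hs =>
    have hx1 : occAt e p₁ = some x := by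
      rw [← hs, occAt_append_some hq (Dir.l :: p₁)] at hpx; exact hpx
    rw [Std] at hstd
    obtain ⟨hse, _, _, hbfb⟩ := hstd
    have hex : clt e x := clt_trans _ _ _ hea hax
    rcases hbfb p₁ x hx1 hex with ⟨q₁, z, hq₁p₁, hoccz, hltz⟩ |
      ⟨q₁, k, g, h, hq₁p₁, hq₁ne, hoccw, hcond, hB₁⟩
    · exfalso
      refine hB (q ++ Dir.l :: q₁) z ⟨Dir.l :: q₁, rfl⟩
        (by rw [← hs]; exact prefix_ext Dir.l hq₁p₁) ?_ hltz
      rw [occAt_append_some hq (Dir.l :: q₁)]; exact hoccz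
    · have hoccQ : occAt a (q ++ Dir.l :: q₁) = some (CT.C k g h) := by
        rw [occAt_append_some hq (Dir.l :: q₁)]; exact hoccw
      have hQpre : (q ++ Dir.l :: q₁) <+: p := by
        rw [← hs]; exact prefix_ext Dir.l hq₁p₁
      have hQne : (q ++ Dir.l :: q₁) ≠ p := by
        rw [← hs]
        intro hcontra
        exact hq₁ne (by simpa using List.append_cancel_left hcontra)
      have hBQ : ∀ r z, (q ++ Dir.l :: q₁) <+: r → r <+: p →
          occAt a r = some z → ¬ clt z (CT.C k g h) := by
        intro r z hr1 hr2 hocc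
        rw [← hs] at hr2
        obtain ⟨s₁, rfl⟩ := hr1
        rw [List.append_assoc, List.cons_append] at hr2 hocc
        have hr₁p₁ : (q₁ ++ s₁) <+: p₁ := prefix_cancel hr2
        rw [occAt_append_some hq (Dir.l :: (q₁ ++ s₁))] at hocc
        exact hB₁ (q₁ ++ s₁) z ⟨s₁, rfl⟩ hr₁p₁ hocc
      rcases hcond with hki | ⟨_, hki, hge⟩
      · exact ⟨q ++ Dir.l :: q₁, k, g, h, hQpre, hQne, hoccQ, hki, hBQ⟩
      · subst hki
        have hga : clt g a := clt_trans _ _ _ hge hea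
        have hstdw : Std true (CT.C k g h) := Std_occAt hse hoccw
        exact convertW a x k p hax hpx (q ++ Dir.l :: q₁) g h
          hoccQ hga hQpre hQne hBQ hstdw
termination_by p.length - q.length
decreasing_by
  have h2 := List.IsPrefix.length_le hq₁p₁
  have h3 := congrArg List.length hs
  simp only [List.length_append, List.length_cons] at h3 ⊢
  omega

/-- A term is standard under the extended passthrough definition iff it is standard
under the original definition; consequently (under the identification of `C_i(a,b)`
with `C(Ω·i + a, b)`) the `C_i` system permits exactly the same terms below `Ω`, with
the same comparison `clt`, as the Degrees of Reflection with Passthrough system using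
pairing for the notation `O` above `Ω`. -/
theorem std_ext_iff_std :
    ∀ t : CT, Std true t ↔ Std false t := by
  intro t
  induction t with
  | zero => simp [Std]
  | C i a b iha ihb =>
    rw [Std, Std]
    constructor
    · rintro ⟨hsa, hsb, hbc, hbfb⟩
      refine ⟨iha.mp hsa, ihb.mp hsb, hbc, ?_⟩
      intro p x hocc hax
      rcases hbfb p x hocc hax with h | ⟨q, j, e, f, hqp, hqnep, hoccw, hcond, hB⟩
      · exact Or.inl h
      · rcases hcond with hji | ⟨_, hji, hea⟩
        · exact Or.inr ⟨q, j, e, f, hqp, hqnep, hoccw, Or.inl hji, hB⟩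
        · subst hji
          obtain ⟨q', j', e', f', h1, h2, h3, h4, h5⟩ :=
            convertW a x j p hax hocc q e f hoccw hea hqp hqnep hB (Std_occAt hsa hoccw)
          exact Or.inr ⟨q', j', e', f', h1, h2, h3, Or.inl h4, h5⟩
    · rintro ⟨hsa, hsb, hbc, hbfb⟩
      refine ⟨iha.mpr hsa, ihb.mpr hsb, hbc, ?_⟩
      intro p x hocc hax
      rcases hbfb p x hocc hax with h | ⟨q, j, e, f, hqp, hqnep, hoccw, hcond, hB⟩
      · exact Or.inl h
      · rcases hcond with hji | ⟨hfalse, _⟩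
        · exact Or.inr ⟨q, j, e, f, hqp, hqnep, hoccw, Or.inl hji, hB⟩
        · exact absurd hfalse (by simp)
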